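/- The map f : ℂ → ℂ defined by f(z) = φ(z) + T(Im φ(z)), where φ(0) = 0, φ(z) = z²/|z| for z ≠ 0, and T(s) = 2|s|/√3 + 2, is a continuous open map such that f⁻¹({2}) = {0} and, for every w ∈ ℂ with w ≠ 2, the fiber f⁻¹({w}) contains exactly two points (so f is a two-to-one branched covering of the plane branched at 0, with critical value 2). -/

import Mathlib

open Complex

/-- The degree-two angle-doubling map `φ(r e^{iθ}) = r e^{2iθ}`. -/
noncomputable def phiMap (z : ℂ) : ℂ :=
  if z = 0 then 0 else z ^ 2 / (‖z‖ : ℂ)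

/-- The translation amount `T(s) = 2|s|/√3 + 2`. -/
noncomputable def Tshift (s : ℝ) : ℝ := 2 * |s| / Real.sqrt 3 + 2

/-- The map `f(z) = φ(z) + T(Im φ(z))`. -/
noncomputable def fMap (z : ℂ) : ℂ := phiMap z + (Tshift ((phiMap z).im) : ℂ)

/-- Radial square-root rescaling `ψ(w) = w / √|w|`. -/
noncomputable def psiMap (w : ℂ) : ℂ := w / (Real.sqrt (‖w‖) : ℂ)

lemma phi_eq (z : ℂ) : phiMap z = psiMap (z ^ 2) := by
  unfold phiMap psiMap
  rcases eq_or_ne z 0 with rfl | h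
  · simp
  · rw [if_neg h, norm_pow, Real.sqrt_sq (norm_nonneg z)]

lemma continuous_psi : Continuous psiMap := by
  rw [continuous_iff_continuousAt]
  intro w
  rcases eq_or_ne w 0 with rfl | hw
  · have h0 : psiMap 0 = 0 := by simp [psiMap]
    unfold ContinuousAt
    rw [h0]
    apply squeeze_zero_norm (a := fun z => Real.sqrt (‖z‖))
    · intro z
      rcases eq_or_ne z 0 with rfl | hz
      · simp [psiMap]
      · have h1 : (0:ℝ) < ‖z‖ := norm_pos_iff.mpr hz
        have h2 : 0 < Real.sqrt (‖z‖) := Real.sqrt_pos.2 h1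
        simp only [psiMap, norm_div, Complex.norm_real, Real.norm_eq_abs,
          _root_.abs_of_nonneg h2.le]
        rw [div_le_iff₀ h2, Real.mul_self_sqrt h1.le]
    · have : Filter.Tendsto (fun z : ℂ => Real.sqrt (‖z‖)) (nhds 0) (nhds (Real.sqrt (‖(0:ℂ)‖))) :=
        (Real.continuous_sqrt.comp continuous_norm).continuousAt
      simpa using this
  · have h1 : (0:ℝ) < ‖w‖ := norm_pos_iff.mpr hw
    have h2 : 0 < Real.sqrt (‖w‖) := Real.sqrt_pos.2 h1
    exact ContinuousAt.div continuousAt_id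
      ((Complex.continuous_ofReal.comp (Real.continuous_sqrt.comp continuous_norm)).continuousAt)
      (by exact_mod_cast h2.ne')

lemma sqrt_cast_mul_self (w : ℂ) :
    ((Real.sqrt (‖w‖) : ℂ)) * ((Real.sqrt (‖w‖) : ℂ)) = (‖w‖ : ℂ) := by
  norm_cast
  exact Real.mul_self_sqrt (norm_nonneg w)

/-- `ψ` as a homeomorphism of `ℂ`, with inverse `w ↦ w * |w|`. -/
noncomputable def psiHomeo : Homeomorph ℂ ℂ where
  toFun := psiMap
  invFun w := w * (‖w‖ : ℂ)
  left_inv w := by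
    rcases eq_or_ne w 0 with rfl | hw
    · simp [psiMap]
    · have h1 : (0:ℝ) < ‖w‖ := norm_pos_iff.mpr hw
      have h2 : 0 < Real.sqrt (‖w‖) := Real.sqrt_pos.2 h1
      have h2' : ((Real.sqrt (‖w‖) : ℂ)) ≠ 0 := by exact_mod_cast h2.ne'
      have habs : (0:ℝ) < ‖w‖ := h1
      simp only [psiMap, norm_div, Complex.norm_real, Real.norm_eq_abs, _root_.abs_of_nonneg h2.le]
      push_cast
      rw [div_mul_div_comm, div_eq_iff (by exact mul_ne_zero h2' h2')]
      rw [sqrt_cast_mul_self]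
  right_inv w := by
    rcases eq_or_ne w 0 with rfl | hw
    · simp [psiMap]
    · have h1 : (0:ℝ) < ‖w‖ := norm_pos_iff.mpr hw
      have habs : ‖w * (‖w‖ : ℂ)‖ = ‖w‖ * ‖w‖ := by
        simp [_root_.abs_of_nonneg h1.le]
      simp only [psiMap, habs]
      rw [show ‖w‖ * ‖w‖ = (‖w‖) ^ 2 by ring,
        Real.sqrt_sq h1.le]
      rw [mul_div_assoc, div_self (by exact_mod_cast h1.ne'), mul_one]
  continuous_toFun := continuous_psi
  continuous_invFun := by
    exact continuous_id.mul (Complex.continuous_ofReal.comp continuous_norm)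

lemma continuous_Tshift : Continuous Tshift := by
  unfold Tshift
  fun_prop

/-- The shear `h(z) = z + T(Im z)` as a homeomorphism of `ℂ`. -/
noncomputable def hHomeo : Homeomorph ℂ ℂ where
  toFun z := z + (Tshift z.im : ℂ)
  invFun z := z - (Tshift z.im : ℂ)
  left_inv z := by simp
  right_inv z := by simp
  continuous_toFun := continuous_id.add
    (Complex.continuous_ofReal.comp (continuous_Tshift.comp Complex.continuous_im))
  continuous_invFun := continuous_id.sub
    (Complex.continuous_ofReal.comp (continuous_Tshift.comp Complex.continuous_im))

lemma fMap_eq : fMap = hHomeo ∘ psiMap ∘ (fun z : ℂ => z ^ 2) := by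
  funext z
  simp only [fMap, Function.comp_apply, hHomeo, Homeomorph.homeomorph_mk_coe,
    Equiv.coe_fn_mk, phi_eq]

lemma isOpenMap_sq : IsOpenMap (fun z : ℂ => z ^ 2) := by
  intro s hs
  rcases ((analyticOnNhd_id (𝕜 := ℂ)).pow 2).is_constant_or_isOpen isPreconnected_univ with h | h
  · obtain ⟨w, hw⟩ := h
    have h0 := hw 0 trivial
    have h1 := hw 1 trivial
    simp at h0 h1
    exact absurd (h0 ▸ h1) one_ne_zero
  · exact h s (Set.subset_univ s) hs

lemma Tshift_zero : Tshift 0 = 2 := by simp [Tshift]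

lemma fMap_apply (z : ℂ) : fMap z = hHomeo (phiMap z) := rfl

lemma phiMap_eq_zero_iff (z : ℂ) : phiMap z = 0 ↔ z = 0 := by
  constructor
  · intro h
    by_contra hz
    rw [phiMap, if_neg hz] at h
    have := norm_pos_iff.mpr hz
    have h2 : (‖z‖ : ℂ) ≠ 0 := by exact_mod_cast this.ne'
    rw [div_eq_zero_iff] at h
    rcases h with h | h
    · exact hz (pow_eq_zero_iff (n := 2) two_ne_zero |>.1 h)
    · exact h2 h
  · rintro rfl; simp [phiMap]

lemma hHomeo_eq_iff (v w : ℂ) : hHomeo v = w ↔ v = w - (Tshift w.im : ℂ) := by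
  constructor
  · intro h
    have him : v.im = w.im := by
      rw [← h]; simp [hHomeo]
    rw [← h]
    simp [hHomeo, him]
  · rintro rfl
    have him : (w - (Tshift w.im : ℂ)).im = w.im := by simp
    simp [hHomeo, him]

lemma phiMap_fiber {u : ℂ} (hu : u ≠ 0) {c : ℂ} (hc : c ^ 2 = u) (z : ℂ) :
    phiMap z = u ↔ z = c * (‖c‖ : ℂ) ∨ z = -(c * (‖c‖ : ℂ)) := by
  have hcne : c ≠ 0 := by
    rintro rfl; rw [← hc] at hu; simp at hu
  have hcabs : (0:ℝ) < ‖c‖ := norm_pos_iff.mpr hcne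
  set a : ℂ := c * (‖c‖ : ℂ) with ha
  have hane : a ≠ 0 := mul_ne_zero hcne (by exact_mod_cast hcabs.ne')
  have habsa : ‖a‖ = ‖c‖ * ‖c‖ := by
    simp [ha, _root_.abs_of_nonneg hcabs.le]
  have hasq : a ^ 2 = u * (‖a‖ : ℂ) := by
    rw [ha, habsa, mul_pow, ← hc]
    push_cast
    ring
  have habsu : ‖u‖ = ‖c‖ * ‖c‖ := by
    rw [← hc]; simp [pow_two]
  have hphia : phiMap a = u := by
    rw [phiMap, if_neg hane, hasq, mul_div_assoc, div_self (by
      exact_mod_cast (habsa ▸ mul_pos hcabs hcabs).ne'), mul_one]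
  constructor
  · intro h
    have hzne : z ≠ 0 := by
      rintro rfl
      rw [phiMap_eq_zero_iff 0 |>.2 rfl] at h; exact hu h.symm
    rw [phiMap, if_neg hzne] at h
    have hzabs : (‖z‖ : ℂ) ≠ 0 := by
      exact_mod_cast (norm_pos_iff.mpr hzne).ne'
    have hz2 : z ^ 2 = u * (‖z‖ : ℂ) := by
      field_simp at h; rw [h, mul_comm]
    have habz : ‖z‖ = ‖u‖ := by
      have := congrArg (‖·‖) hz2
      simp only [norm_mul, norm_pow, Complex.norm_real, Real.norm_eq_abs,
        _root_.abs_of_nonneg (norm_nonneg z)] at this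
      have hzpos := norm_pos_iff.mpr hzne
      nlinarith [norm_nonneg u]
    have : z ^ 2 = a ^ 2 := by
      rw [hz2, hasq, habz, habsa, habsu]
    have : (z - a) * (z + a) = 0 := by ring_nf; linear_combination this
    rcases mul_eq_zero.1 this with h' | h'
    · left; linear_combination h'
    · right; linear_combination h'
  · rintro (rfl | rfl)
    · exact hphia
    · rw [phiMap, if_neg (neg_ne_zero.2 hane), norm_neg, neg_pow]
      simpa [phiMap, if_neg hane] using hphia

theorem fMap_is_two_to_one_branched_covering :
    Continuous fMap ∧ IsOpenMap fMap ∧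
    fMap ⁻¹' {2} = {0} ∧
    ∀ w : ℂ, w ≠ 2 → ∃ a b : ℂ, a ≠ b ∧ fMap ⁻¹' {w} = {a, b} := by
  refine ⟨?_, ?_, ?_, ?_⟩
  · rw [fMap_eq]
    exact hHomeo.continuous.comp (continuous_psi.comp (continuous_pow 2))
  · rw [fMap_eq]
    exact hHomeo.isOpenMap.comp (psiHomeo.isOpenMap.comp isOpenMap_sq)
  · ext z
    simp only [Set.mem_preimage, Set.mem_singleton_iff, fMap_apply, hHomeo_eq_iff]
    rw [show ((2:ℂ)).im = 0 by simp, Tshift_zero]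
    norm_num
    exact phiMap_eq_zero_iff z
  · intro w hw
    set u : ℂ := w - (Tshift w.im : ℂ) with hu_def
    have hu : u ≠ 0 := by
      intro h
      have : w = (Tshift w.im : ℂ) := by
        rw [hu_def] at h; linear_combination h
      have him : w.im = 0 := by rw [this]; simp
      rw [him, Tshift_zero] at this
      exact hw (by exact_mod_cast this)
    obtain ⟨c, hc⟩ := Complex.isAlgClosed.exists_pow_nat_eq u two_pos
    refine ⟨c * (‖c‖ : ℂ), -(c * (‖c‖ : ℂ)), ?_, ?_⟩
    · have hcne : c ≠ 0 := by rintro rfl; rw [← hc] at hu; simp at hu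
      have : c * (‖c‖ : ℂ) ≠ 0 :=
        mul_ne_zero hcne (by exact_mod_cast (norm_pos_iff.mpr hcne).ne')
      intro h
      exact this (by linear_combination (h : _) / 2)
    · ext z
      simp only [Set.mem_preimage, Set.mem_singleton_iff, fMap_apply, hHomeo_eq_iff,
        Set.mem_insert_iff]
      rw [← hu_def]
      exact phiMap_fiber hu hc z
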